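/- A voting by quota f^q (with quotas q_k, 1 ≤ q_k ≤ n, for each object k) on the universal domain of strict preferences on 2^K is not obviously manipulable if and only if 2 ≤ q_k ≤ n−1 for every k ∈ K. -/
import Mathlib


/-- A preference profile: each agent `i : Fin n` has a strict preference,
modeled as a linear order on the set of alternatives `X`. -/
abbrev Profile (n : ℕ) (X : Type*) := Fin n → LinearOrder X

/-- The top (best) alternative of a preference `L`. -/
noncomputable def top {X : Type*} [Fintype X] [Nonempty X] (L : LinearOrder X) : X :=
  @Finset.max' X L Finset.univ Finset.univ_nonempty

/-- `x` is strictly preferred to `y` according to `L`. -/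
def prefers {X : Type*} (L : LinearOrder X) (x y : X) : Prop := L.lt y x

/-- The option set left open by preference `L` of agent `i` at rule `f`. -/
def OptionSet {n : ℕ} {X : Type*} (f : Profile n X → X) (i : Fin n) (L : LinearOrder X) :
    Set X :=
  {x | ∃ P : Profile n X, P i = L ∧ f P = x}

/-- `Li'` is a profitable manipulation of `f` at (true preference) `Li` for agent `i`. -/
def IsManip {n : ℕ} {X : Type*} (f : Profile n X → X) (i : Fin n)
    (Li Li' : LinearOrder X) : Prop :=
  ∃ P : Profile n X, P i = Li ∧ prefers Li (f (Function.update P i Li')) (f P)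

/-- The worst element of `O(Li')` is strictly `Li`-preferred to the worst element of `O(Li)`.
For nonempty finite option sets this is equivalent to: some element of `O(Li)` is strictly
worse (w.r.t. `Li`) than every element of `O(Li')`. -/
def WorstImproves {n : ℕ} {X : Type*} (f : Profile n X → X) (i : Fin n)
    (Li Li' : LinearOrder X) : Prop :=
  ∃ w ∈ OptionSet f i Li, ∀ w' ∈ OptionSet f i Li', prefers Li w' w

/-- The best element of `O(Li')` is strictly `Li`-preferred to the best element of `O(Li)`.
For nonempty finite option sets this is equivalent to: some element of `O(Li')` is strictly
better (w.r.t. `Li`) than every element of `O(Li)`. -/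
def BestImproves {n : ℕ} {X : Type*} (f : Profile n X → X) (i : Fin n)
    (Li Li' : LinearOrder X) : Prop :=
  ∃ b' ∈ OptionSet f i Li', ∀ b ∈ OptionSet f i Li, prefers Li b' b

/-- `Li'` is an obvious manipulation of `f` at `Li` for agent `i`. -/
def IsObviousManip {n : ℕ} {X : Type*} (f : Profile n X → X) (i : Fin n)
    (Li Li' : LinearOrder X) : Prop :=
  IsManip f i Li Li' ∧ (WorstImproves f i Li Li' ∨ BestImproves f i Li Li')

/-- `f` is not obviously manipulable. -/
def NOM {n : ℕ} {X : Type*} (f : Profile n X → X) : Prop :=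
  ∀ (i : Fin n) (Li Li' : LinearOrder X), ¬ IsObviousManip f i Li Li'

/-- `f` is tops-only. -/
def TopsOnly {n : ℕ} {X : Type*} [Fintype X] [Nonempty X] (f : Profile n X → X) : Prop :=
  ∀ P P' : Profile n X, (∀ i, top (P i) = top (P' i)) → f P = f P'

/-- The set `V_i` of alternatives that agent `i` vetoes via some preference. -/
def VetoSet {n : ℕ} {X : Type*} (f : Profile n X → X) (i : Fin n) : Set X :=
  {x | ∃ L : LinearOrder X, x ∉ OptionSet f i L}

/-- The set `SV_i` of alternatives strongly vetoed by agent `i`: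
`x` is vetoed via `L` precisely when the top of `L` differs from `x`. -/
def StrongVetoSet {n : ℕ} {X : Type*} [Fintype X] [Nonempty X]
    (f : Profile n X → X) (i : Fin n) : Set X :=
  {x | ∀ L : LinearOrder X, x ∉ OptionSet f i L ↔ top L ≠ x}

/-- `f` is dictatorial: some agent's top alternative is always selected. -/
def Dictatorial {n : ℕ} {X : Type*} [Fintype X] [Nonempty X]
    (f : Profile n X → X) : Prop :=
  ∃ i : Fin n, ∀ P : Profile n X, f P = top (P i)

/-- Voting by quota: object `k` is chosen iff at least `q k` agents have `k` in their
top set. Alternatives are subsets of the set `K` of objects. -/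
noncomputable def vbq {n : ℕ} {K : Type*} [Fintype K] [DecidableEq K]
    (q : K → ℕ) (P : Profile n (Finset K)) : Finset K :=
  Finset.univ.filter fun k =>
    q k ≤ (Finset.univ.filter fun i : Fin n => k ∈ top (P i)).card


noncomputable def gf {X : Type*} [Fintype X] [DecidableEq X] (tp bt : X) : X → ℕ :=
  fun y => if y = tp then 2 * Fintype.card X + 2 else if y = bt then 0 else (Fintype.equivFin X y : ℕ) + 1

lemma gf_top {X : Type*} [Fintype X] [DecidableEq X] (tp bt : X) :
    gf tp bt tp = 2 * Fintype.card X + 2 := by simp [gf]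

lemma gf_bot {X : Type*} [Fintype X] [DecidableEq X] {tp bt : X} (hne : tp ≠ bt) :
    gf tp bt bt = 0 := by simp [gf, Ne.symm hne]

lemma gf_val {X : Type*} [Fintype X] [DecidableEq X] {tp bt y : X} (h1 : y ≠ tp) (h2 : y ≠ bt) :
    gf tp bt y = (Fintype.equivFin X y : ℕ) + 1 := by simp [gf, h1, h2]

lemma gf_le {X : Type*} [Fintype X] [DecidableEq X] {tp bt y : X} (h : y ≠ tp) :
    gf tp bt y ≤ Fintype.card X := by
  by_cases h2 : y = bt
  · subst h2; rw [gf_bot (fun hh => h hh.symm)]; omega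
  · rw [gf_val h h2]; have := (Fintype.equivFin X y).isLt; omega

lemma gf_pos {X : Type*} [Fintype X] [DecidableEq X] {tp bt y : X} (h : y ≠ bt) :
    0 < gf tp bt y := by
  by_cases h1 : y = tp
  · subst h1; rw [gf_top]; omega
  · rw [gf_val h1 h]; omega

lemma gf_inj {X : Type*} [Fintype X] [DecidableEq X] (tp bt : X) : Function.Injective (gf tp bt) := by
  intro a b hab
  by_cases ha : a = tp
  · by_cases hb : b = tp
    · rw [ha, hb]
    · exfalso; have := gf_le (tp := tp) (bt := bt) hb; rw [ha, gf_top] at hab; omega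
  · by_cases hb : b = tp
    · exfalso; have := gf_le (tp := tp) (bt := bt) ha; rw [hb, gf_top] at hab; omega
    · by_cases ha' : a = bt
      · by_cases hb' : b = bt
        · rw [ha', hb']
        · exfalso
          rw [ha', gf_bot (fun hh => ha (ha' ▸ hh.symm)), gf_val hb hb'] at hab; omega
      · by_cases hb' : b = bt
        · exfalso
          rw [hb', gf_bot (fun hh => hb (hb' ▸ hh.symm)), gf_val ha ha'] at hab; omega
        · rw [gf_val ha ha', gf_val hb hb'] at hab
          exact (Fintype.equivFin X).injective (Fin.ext (by omega))

noncomputable def mkOrder {X : Type*} [Fintype X] [DecidableEq X] (tp bt : X) : LinearOrder X :=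
  LinearOrder.lift' (gf tp bt) (gf_inj tp bt)

lemma mkOrder_le_iff {X : Type*} [Fintype X] [DecidableEq X] {tp bt a b : X} :
    (mkOrder tp bt).le a b ↔ gf tp bt a ≤ gf tp bt b := Iff.rfl

lemma mkOrder_lt_iff {X : Type*} [Fintype X] [DecidableEq X] {tp bt a b : X} :
    (mkOrder tp bt).lt a b ↔ gf tp bt a < gf tp bt b := by
  rw [@lt_iff_le_not_ge X (mkOrder tp bt).toPreorder a b]
  constructor
  · rintro ⟨h1, h2⟩
    rw [mkOrder_le_iff] at h1 h2; omega
  · intro h; exact ⟨mkOrder_le_iff.2 (le_of_lt h), fun hc => absurd (mkOrder_le_iff.1 hc) (by omega)⟩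

lemma top_mkOrder {X : Type*} [Fintype X] [DecidableEq X] [Nonempty X] (tp bt : X) :
    top (mkOrder tp bt) = tp := by
  have hle : ∀ y : X, (mkOrder tp bt).le y tp := by
    intro y
    rw [mkOrder_le_iff, gf_top]
    by_cases hy : y = tp
    · rw [hy, gf_top]
    · have := gf_le (bt := bt) hy; omega
  refine @le_antisymm X (mkOrder tp bt).toPartialOrder _ _ ?_ ?_
  · exact @Finset.max'_le X (mkOrder tp bt) _ _ _ (fun y _ => hle y)
  · exact @Finset.le_max' X (mkOrder tp bt) _ _ (Finset.mem_univ tp)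

lemma mkOrder_min {X : Type*} [Fintype X] [DecidableEq X] {tp bt : X} (hne : tp ≠ bt) :
    ∀ y, y ≠ bt → (mkOrder tp bt).lt bt y := by
  intro y hy
  rw [mkOrder_lt_iff, gf_bot hne]
  exact gf_pos hy

section VbqHelpers

variable {n : ℕ} {K : Type*} [Fintype K] [DecidableEq K]

lemma mem_vbq (q : K → ℕ) (P : Profile n (Finset K)) (k : K) :
    k ∈ vbq (n := n) q P ↔
      q k ≤ (Finset.univ.filter fun i : Fin n => k ∈ top (P i)).card := by
  simp [vbq]

lemma count_profile (i : Fin n) (L : LinearOrder (Finset K)) (s : Finset K) (k : K) :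
    (Finset.univ.filter fun j : Fin n =>
        k ∈ top (Function.update (fun _ : Fin n => mkOrder s s) i L j)).card
      = (if k ∈ top L then 1 else 0) + (if k ∈ s then n - 1 else 0) := by
  have htop : ∀ j : Fin n, top (Function.update (fun _ : Fin n => mkOrder s s) i L j)
      = if j = i then top L else s := by
    intro j
    by_cases hj : j = i
    · subst hj; simp
    · simp [Function.update_of_ne hj, top_mkOrder, hj]
  simp only [htop]
  by_cases h1 : k ∈ top L <;> by_cases h2 : k ∈ s
  · have heq : (Finset.univ.filter fun j : Fin n => k ∈ if j = i then top L else s)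
        = Finset.univ := by
      apply Finset.filter_true_of_mem; intro j _; split <;> assumption
    rw [heq, if_pos h1, if_pos h2, Finset.card_univ, Fintype.card_fin]
    have := i.pos; omega
  · have hiff : ∀ j : Fin n, (k ∈ if j = i then top L else s) ↔ j = i := by
      intro j; by_cases hj : j = i <;> simp [hj, h1, h2]
    simp only [hiff, Finset.filter_eq', Finset.mem_univ, if_pos, if_pos h1, if_neg h2,
      Finset.card_singleton]
  · have hiff : ∀ j : Fin n, (k ∈ if j = i then top L else s) ↔ ¬ j = i := by
      intro j; by_cases hj : j = i <;> simp [hj, h1, h2]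
    simp only [hiff]
    rw [Finset.filter_not, Finset.filter_eq', if_pos (Finset.mem_univ i)]
    rw [if_neg h1, if_pos h2, Finset.card_sdiff_of_subset (by simp), Finset.card_univ, Fintype.card_fin,
      Finset.card_singleton]
    omega
  · have heq : (Finset.univ.filter fun j : Fin n => k ∈ if j = i then top L else s)
        = ∅ := by
      apply Finset.filter_false_of_mem; intro j _; split <;> assumption
    rw [heq, if_neg h1, if_neg h2, Finset.card_empty]

lemma optionSet_univ (hn : 2 ≤ n) (q : K → ℕ) (hq2 : ∀ k, 2 ≤ q k ∧ q k ≤ n - 1)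
    (i : Fin n) (L : LinearOrder (Finset K)) (S : Finset K) :
    S ∈ OptionSet (vbq (n := n) q) i L := by
  refine ⟨Function.update (fun _ : Fin n => mkOrder S S) i L, Function.update_self _ _ _, ?_⟩
  ext k
  rw [mem_vbq, count_profile i L S k]
  obtain ⟨hk1, hk2⟩ := hq2 k
  by_cases hS : k ∈ S
  · simp only [hS, if_pos, iff_true]
    split <;> omega
  · simp only [hS, if_neg, iff_false, not_le, if_false]
    split <;> omega

lemma guarantee_in (q : K → ℕ) {k₀ : K} (h1 : q k₀ = 1) (i : Fin n)
    (P : Profile n (Finset K)) (h : k₀ ∈ top (P i)) : k₀ ∈ vbq (n := n) q P := by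
  rw [mem_vbq, h1]
  have hmem : i ∈ Finset.univ.filter (fun j : Fin n => k₀ ∈ top (P j)) := by simp [h]
  have := Finset.card_pos.2 ⟨i, hmem⟩
  omega

lemma guarantee_out (q : K → ℕ) {k₀ : K} (hqn : q k₀ = n) (i : Fin n)
    (P : Profile n (Finset K)) (h : k₀ ∉ top (P i)) : k₀ ∉ vbq (n := n) q P := by
  rw [mem_vbq, hqn]
  intro hc
  have hsub : Finset.univ.filter (fun j : Fin n => k₀ ∈ top (P j)) ⊆ Finset.univ.erase i := by
    intro j hj
    simp only [Finset.mem_filter, Finset.mem_univ, true_and] at hj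
    simp only [Finset.mem_erase, Finset.mem_univ, and_true]
    rintro rfl; exact h hj
  have hcard := Finset.card_le_card hsub
  rw [Finset.card_erase_of_mem (Finset.mem_univ i), Finset.card_univ, Fintype.card_fin] at hcard
  have := i.pos
  omega

lemma obvious_of (q : K → ℕ) (i : Fin n) (t t' w s : Finset K)
    (hne : t ≠ w)
    (hdiff : ∀ P' : Profile n (Finset K), top (P' i) = t' → vbq (n := n) q P' ≠ w)
    (hout : vbq (n := n) q
        (Function.update (fun _ : Fin n => mkOrder s s) i (mkOrder t w)) = w) :
    IsObviousManip (vbq (n := n) q) i (mkOrder t w) (mkOrder t' t') := by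
  have hmin := mkOrder_min hne
  have hPi : (Function.update (fun _ : Fin n => mkOrder s s) i (mkOrder t w)) i = mkOrder t w :=
    Function.update_self _ _ _
  constructor
  · refine ⟨Function.update (fun _ : Fin n => mkOrder s s) i (mkOrder t w), hPi, ?_⟩
    have htop' : top ((Function.update
        (Function.update (fun _ : Fin n => mkOrder s s) i (mkOrder t w)) i (mkOrder t' t')) i)
        = t' := by
      rw [Function.update_self]; exact top_mkOrder _ _
    have hne' := hdiff _ htop'
    show (mkOrder t w).lt _ _
    rw [hout]
    exact hmin _ hne'
  · left
    refine ⟨w, ⟨_, hPi, hout⟩, ?_⟩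
    rintro w' ⟨P', hP'i, rfl⟩
    have htop' : top (P' i) = t' := by rw [hP'i]; exact top_mkOrder _ _
    exact hmin _ (hdiff P' htop')

end VbqHelpers

/-- A voting by quota (with `1 ≤ q_k ≤ n` for each object) is NOM iff
`2 ≤ q_k ≤ n - 1` for every object `k`. -/
theorem vbq_NOM {n : ℕ} {K : Type*} [Fintype K] [DecidableEq K]
    (hn : 2 ≤ n) (hK : 2 ≤ Fintype.card K)
    (q : K → ℕ) (hq : ∀ k, 1 ≤ q k ∧ q k ≤ n) :
    NOM (vbq (n := n) q) ↔ ∀ k : K, 2 ≤ q k ∧ q k ≤ n - 1 := by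
  constructor
  · intro hNOM
    by_contra hc
    push_neg at hc
    obtain ⟨k₀, hk₀⟩ := hc
    have hq1 := (hq k₀).1
    have hq2 := (hq k₀).2
    have hcase : q k₀ = 1 ∨ q k₀ = n := by
      rcases Nat.lt_or_ge (q k₀) 2 with h | h
      · left; omega
      · right; have := hk₀ h; omega
    obtain ⟨k₁, hk₁⟩ := Fintype.exists_ne_of_one_lt_card (by omega) k₀
    have i : Fin n := ⟨0, by omega⟩
    rcases hcase with h1 | hN
    · -- q k₀ = 1
      by_cases hex : ∃ k', k' ≠ k₀ ∧ 2 ≤ q k'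
      · obtain ⟨k', hk'ne, hk'2⟩ := hex
        refine hNOM i (mkOrder {k'} ∅) (mkOrder {k₀, k'} {k₀, k'}) ?_
        refine obvious_of q i {k'} {k₀, k'} ∅ ∅ (by simp) ?_ ?_
        · intro P' htP' hcon
          have hin : k₀ ∈ vbq (n := n) q P' :=
            guarantee_in q h1 i P' (by rw [htP']; simp)
          rw [hcon] at hin
          simp at hin
        · ext k
          rw [mem_vbq, count_profile i _ ∅ k, top_mkOrder]
          simp only [Finset.notMem_empty, if_false, iff_false, not_le, add_zero,
            Finset.mem_singleton]
          by_cases hk : k = k'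
          · subst hk; rw [if_pos rfl]; omega
          · rw [if_neg hk]; have := (hq k).1; omega
      · push_neg at hex
        have hall : ∀ k, k ≠ k₀ → q k = 1 := by
          intro k hk; have := hex k hk; have := (hq k).1; omega
        have hk₁q : q k₁ = 1 := hall k₁ hk₁
        refine hNOM i (mkOrder ∅ {k₁}) (mkOrder {k₀} {k₀}) ?_
        refine obvious_of q i ∅ {k₀} {k₁} {k₁} (Ne.symm (Finset.singleton_ne_empty k₁)) ?_ ?_
        · intro P' htP' hcon
          have hin : k₀ ∈ vbq (n := n) q P' :=
            guarantee_in q h1 i P' (by rw [htP']; simp)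
          rw [hcon] at hin
          simp only [Finset.mem_singleton] at hin
          exact hk₁ hin.symm
        · ext k
          rw [mem_vbq, count_profile i _ {k₁} k, top_mkOrder]
          simp only [Finset.notMem_empty, if_false, zero_add, Finset.mem_singleton]
          by_cases hk : k = k₁
          · subst hk; rw [if_pos rfl]; simp [hk₁q]; omega
          · rw [if_neg hk]; simp [hk]; have := (hq k).1; omega
    · -- q k₀ = n
      by_cases hex : ∃ k', k' ≠ k₀ ∧ q k' ≤ n - 1
      · obtain ⟨k', hk'ne, hk'le⟩ := hex
        refine hNOM i (mkOrder (Finset.univ.erase k') Finset.univ)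
          (mkOrder ((Finset.univ.erase k').erase k₀) ((Finset.univ.erase k').erase k₀)) ?_
        refine obvious_of q i (Finset.univ.erase k') ((Finset.univ.erase k').erase k₀)
          Finset.univ Finset.univ ?_ ?_ ?_
        · intro hcon
          have : k' ∈ Finset.univ.erase k' := by rw [hcon]; exact Finset.mem_univ k'
          simp at this
        · intro P' htP' hcon
          have hout : k₀ ∉ vbq (n := n) q P' :=
            guarantee_out q hN i P' (by rw [htP']; simp)
          rw [hcon] at hout
          exact hout (Finset.mem_univ k₀)
        · ext k
          rw [mem_vbq, count_profile i _ Finset.univ k, top_mkOrder]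
          simp only [Finset.mem_univ, if_pos, iff_true, Finset.mem_erase, and_true]
          by_cases hk : k = k'
          · subst hk; simp; omega
          · simp [hk]; have := (hq k).2; omega
      · push_neg at hex
        have hall : ∀ k, k ≠ k₀ → q k = n := by
          intro k hk; have := hex k hk; have := (hq k).2; omega
        have hk₁q : q k₁ = n := hall k₁ hk₁
        refine hNOM i (mkOrder Finset.univ (Finset.univ.erase k₁))
          (mkOrder (Finset.univ.erase k₀) (Finset.univ.erase k₀)) ?_
        refine obvious_of q i Finset.univ (Finset.univ.erase k₀)
          (Finset.univ.erase k₁) (Finset.univ.erase k₁) ?_ ?_ ?_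
        · intro hcon
          have : k₁ ∈ Finset.univ.erase k₁ := by rw [← hcon]; exact Finset.mem_univ k₁
          simp at this
        · intro P' htP' hcon
          have hout : k₀ ∉ vbq (n := n) q P' :=
            guarantee_out q hN i P' (by rw [htP']; simp)
          rw [hcon] at hout
          exact hout (by simp [Ne.symm hk₁])
        · ext k
          rw [mem_vbq, count_profile i _ (Finset.univ.erase k₁) k, top_mkOrder]
          simp only [Finset.mem_univ, if_pos, Finset.mem_erase, and_true]
          by_cases hk : k = k₁
          · subst hk; simp; omega
          · simp [hk]; have := (hq k).2; omega
  · intro hq2 i Li Li' hOM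
    obtain ⟨hm, hw⟩ := hOM
    rcases hw with ⟨w, hwO, hall⟩ | ⟨b', hb'O, hall⟩
    · exact @lt_irrefl _ Li.toPreorder w (hall w (optionSet_univ hn q hq2 i Li' w))
    · exact @lt_irrefl _ Li.toPreorder b' (hall b' (optionSet_univ hn q hq2 i Li b'))
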